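/- For 0 < λ ≤ 1, every f = h + conj(g) ∈ F_H^0(λ) satisfies |z| - λ|z|²/2 ≤ |f(z)| ≤ |z| + λ|z|²/2 for all z ∈ 𝔻. -/

import Mathlib

open Metric
open Set

lemma exists_unit_align (a b : ℂ) : ∃ c : ℂ, ‖c‖ = 1 ∧ ‖a + c * b‖ = ‖a‖ + ‖b‖ := by
  rcases eq_or_ne b 0 with rfl | hb
  · exact ⟨1, by simp⟩
  rcases eq_or_ne a 0 with rfl | ha
  · exact ⟨1, by simp⟩
  have ha' : (0:ℝ) < ‖a‖ := norm_pos_iff.2 ha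
  have hb' : (0:ℝ) < ‖b‖ := norm_pos_iff.2 hb
  have haC : ‖a‖ ≠ 0 := by exact ha'.ne'
  have hbC : ‖b‖ ≠ 0 := by exact hb'.ne'
  refine ⟨a * (‖b‖:ℂ) / ((‖a‖:ℂ) * b), ?_, ?_⟩
  · rw [norm_div, norm_mul, norm_mul, Complex.norm_real, Complex.norm_real,
      Real.norm_eq_abs, Real.norm_eq_abs, abs_norm, abs_norm]
    field_simp
  · have hcb : a * (‖b‖:ℂ) / ((‖a‖:ℂ) * b) * b = a * (‖b‖:ℂ) / (‖a‖:ℂ) := by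
      field_simp
    have key : a + a * (‖b‖:ℂ) / ((‖a‖:ℂ) * b) * b = (((‖a‖ + ‖b‖ : ℝ) : ℂ)) / ((‖a‖:ℝ):ℂ) * a := by
      have hAC : ((‖a‖ : ℝ) : ℂ) ≠ 0 := by exact_mod_cast haC
      rw [hcb]
      field_simp
      push_cast
      ring
    rw [key, norm_mul, norm_div, Complex.norm_real, Complex.norm_real,
      Real.norm_eq_abs, Real.norm_eq_abs, abs_of_pos (by positivity), abs_of_pos ha']
    field_simp

theorem growth_bounds_lambda
    (h g : ℂ → ℂ) (lam : ℝ)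
    (hlam : 0 < lam) (hlam1 : lam ≤ 1)
    (hh : DifferentiableOn ℂ h (ball (0:ℂ) 1))
    (hg : DifferentiableOn ℂ g (ball (0:ℂ) 1))
    (h0 : h 0 = 0) (h1 : deriv h 0 = 1) (g0 : g 0 = 0) (g1 : deriv g 0 = 0)
    (hineq : ∀ z ∈ ball (0:ℂ) 1, ‖deriv h z - 1‖ < lam - ‖deriv g z‖) :
    ∀ z ∈ ball (0:ℂ) 1,
      ‖z‖ - lam * ‖z‖ ^ 2 / 2 ≤ ‖h z + (starRingEnd ℂ) (g z)‖ ∧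
      ‖h z + (starRingEnd ℂ) (g z)‖ ≤ ‖z‖ + lam * ‖z‖ ^ 2 / 2 := by
  have hdh : DifferentiableOn ℂ (deriv h) (ball 0 1) :=
    ((hh.analyticOnNhd isOpen_ball).deriv).differentiableOn
  have hdg : DifferentiableOn ℂ (deriv g) (ball 0 1) :=
    ((hg.analyticOnNhd isOpen_ball).deriv).differentiableOn
  -- Step 1: combined Schwarz estimate
  have key : ∀ w ∈ ball (0:ℂ) 1, ‖deriv h w - 1‖ + ‖deriv g w‖ ≤ lam * ‖w‖ := by
    intro w hw
    obtain ⟨c, hc1, hc2⟩ := exists_unit_align (deriv h w - 1) (deriv g w)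
    set F : ℂ → ℂ := fun ζ => deriv h ζ - 1 + c * deriv g ζ with hF
    have hFd : DifferentiableOn ℂ F (ball 0 1) :=
      (hdh.sub (differentiableOn_const 1)).add ((differentiableOn_const c).mul hdg)
    have hF0 : F 0 = 0 := by simp [hF, h1, g1]
    have hmaps : MapsTo F (ball 0 1) (ball (F 0) lam) := by
      intro ζ hζ
      simp only [hF0, mem_ball_zero_iff]
      have h1' := hineq ζ hζ
      calc ‖F ζ‖ ≤ ‖deriv h ζ - 1‖ + ‖c * deriv g ζ‖ := norm_add_le _ _
        _ = ‖deriv h ζ - 1‖ + ‖deriv g ζ‖ := by rw [norm_mul, hc1, one_mul]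
        _ < lam := by linarith
    have hS := Complex.dist_le_div_mul_dist_of_mapsTo_ball hFd (hmaps.mono_right ball_subset_closedBall) hw
    rw [hF0, dist_zero_right, dist_zero_right, div_one] at hS
    calc ‖deriv h w - 1‖ + ‖deriv g w‖ = ‖F w‖ := hc2.symm
      _ ≤ lam * ‖w‖ := hS
  -- Step 2: integrate along the segment
  intro z hz
  have hz1 : ‖z‖ < 1 := mem_ball_zero_iff.1 hz
  set φ : ℝ → ℂ := fun t => h ((t:ℂ)*z) + (starRingEnd ℂ) (g ((t:ℂ)*z)) - (t:ℂ)*z with hφ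
  set φ' : ℝ → ℂ := fun t =>
    deriv h ((t:ℂ)*z) * z + (starRingEnd ℂ) (deriv g ((t:ℂ)*z) * z) - z with hφ'
  have hmem : ∀ t ∈ Icc (0:ℝ) 1, (t:ℂ)*z ∈ ball (0:ℂ) 1 := by
    intro t ht
    rw [mem_ball_zero_iff, norm_mul, Complex.norm_real, Real.norm_eq_abs,
      abs_of_nonneg ht.1]
    nlinarith [ht.2, norm_nonneg z]
  have hd : ∀ t ∈ Icc (0:ℝ) 1, HasDerivAt φ (φ' t) t := by
    intro t ht
    have hw := hmem t ht
    have hc : HasDerivAt (fun s : ℝ => (s:ℂ)*z) z t := by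
      simpa using ((hasDerivAt_id t).ofReal_comp.mul_const z)
    have hH : HasDerivAt (fun s : ℝ => h ((s:ℂ)*z)) (deriv h ((t:ℂ)*z) * z) t := by
      have hdd := ((hh.differentiableAt (isOpen_ball.mem_nhds hw)).hasDerivAt).hasFDerivAt
      have := (hdd.restrictScalars ℝ).comp_hasDerivAt t hc
      simpa [mul_comm, Function.comp_def] using this
    have hG : HasDerivAt (fun s : ℝ => g ((s:ℂ)*z)) (deriv g ((t:ℂ)*z) * z) t := by
      have hdd := ((hg.differentiableAt (isOpen_ball.mem_nhds hw)).hasDerivAt).hasFDerivAt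
      have := (hdd.restrictScalars ℝ).comp_hasDerivAt t hc
      simpa [mul_comm, Function.comp_def] using this
    have hGs : HasDerivAt (fun s : ℝ => (starRingEnd ℂ) (g ((s:ℂ)*z)))
        ((starRingEnd ℂ) (deriv g ((t:ℂ)*z) * z)) t := by
      exact hG.star
    exact (hH.add hGs).sub hc
  have hbound : ∀ t ∈ Ico (0:ℝ) 1, ‖φ' t‖ ≤ lam * ‖z‖^2 * t := by
    intro t ht
    have ht' : t ∈ Icc (0:ℝ) 1 := ⟨ht.1, ht.2.le⟩
    have hw := hmem t ht'
    have hk := key _ hw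
    have e : φ' t = (deriv h ((t:ℂ)*z) - 1) * z + (starRingEnd ℂ) (deriv g ((t:ℂ)*z) * z) := by
      simp only [hφ']; ring
    have hnw : ‖(t:ℂ)*z‖ = t * ‖z‖ := by
      rw [norm_mul, Complex.norm_real, Real.norm_eq_abs, abs_of_nonneg ht.1]
    calc ‖φ' t‖ ≤ ‖(deriv h ((t:ℂ)*z) - 1) * z‖ + ‖(starRingEnd ℂ) (deriv g ((t:ℂ)*z) * z)‖ := by
          rw [e]; exact norm_add_le _ _
      _ = (‖deriv h ((t:ℂ)*z) - 1‖ + ‖deriv g ((t:ℂ)*z)‖) * ‖z‖ := by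
          rw [RCLike.norm_conj, norm_mul, norm_mul]; ring
      _ ≤ (lam * ((t:ℝ) * ‖z‖)) * ‖z‖ := by
          rw [← hnw]
          exact mul_le_mul_of_nonneg_right (by simpa [hnw] using hk) (norm_nonneg z)
      _ = lam * ‖z‖^2 * t := by ring
  have main := image_norm_le_of_norm_deriv_right_le_deriv_boundary
    (f := φ) (f' := φ') (a := 0) (b := 1)
    (fun t ht => ((hd t ht).continuousAt).continuousWithinAt)
    (fun t ht => (hd t ⟨ht.1, ht.2.le⟩).hasDerivWithinAt)
    (B := fun t => lam * ‖z‖^2 / 2 * t^2) (B' := fun t => lam * ‖z‖^2 * t)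
    (by simp [hφ, h0, g0])
    (fun t => by
      have hp := (hasDerivAt_pow 2 t).const_mul (lam * ‖z‖^2 / 2)
      refine hp.congr_deriv ?_
      rw [show (2:ℕ) - 1 = 1 from rfl]
      ring)
    hbound
  have hfin : ‖h z + (starRingEnd ℂ) (g z) - z‖ ≤ lam * ‖z‖^2 / 2 := by
    have := main (Set.right_mem_Icc.2 zero_le_one)
    simpa [hφ] using this
  constructor
  · have A := norm_sub_norm_le z (h z + (starRingEnd ℂ) (g z))
    rw [norm_sub_rev] at A
    nlinarith
  · have A := norm_sub_norm_le (h z + (starRingEnd ℂ) (g z)) z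
    nlinarith
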